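/- If C →∂ G ⇉ V is a free crossed module of groupoids with basis ω : R → G, then the abelianization C^{ab} = ⊔_{e∈V} C_e^{ab} is a free module over the quotient groupoid Q = G/∂C, with basis the image of the induced map R → C^{ab}. -/

import Mathlib

/-- A groupoid given algebraically: arrows `G` over vertices `V`, with totalised
composition whose axioms are guarded by the composability condition `r α = d β`. -/
structure AlgGroupoid (V : Type*) (G : Type*) where
  d : G → V
  r : G → V
  comp : G → G → G
  idm : V → G
  inv : G → G
  d_idm : ∀ v, d (idm v) = v
  r_idm : ∀ v, r (idm v) = v
  d_comp : ∀ α β, r α = d β → d (comp α β) = d α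
  r_comp : ∀ α β, r α = d β → r (comp α β) = r β
  comp_assoc : ∀ α β γ, r α = d β → r β = d γ →
    comp (comp α β) γ = comp α (comp β γ)
  idm_comp : ∀ α, comp (idm (d α)) α = α
  comp_idm : ∀ α, comp α (idm (r α)) = α
  d_inv : ∀ α, d (inv α) = r α
  r_inv : ∀ α, r (inv α) = d α
  comp_inv : ∀ α, comp α (inv α) = idm (d α)
  inv_comp : ∀ α, comp (inv α) α = idm (r α)

/-- A crossed module of groupoids over the groupoid `𝒢` (with vertex set `V` and arrow
set `G`): a totally intransitive groupoid `base` on arrows `C` over the same vertices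
(i.e. a disjoint union of groups `C_e`, `e ∈ V`, since `d = r` on `C`), a groupoid
morphism `δ : C → G` over the identity on `V`, and an action of `G` on `C` satisfying
`(c^g)δ = g⁻¹ (cδ) g` and `c^{aδ} = a⁻¹ c a`. -/
structure CrossedModuleOver {V G : Type*} (𝒢 : AlgGroupoid V G) (C : Type*) where
  base : AlgGroupoid V C
  fib : ∀ c : C, base.d c = base.r c
  δ : C → G
  δ_d : ∀ c, 𝒢.d (δ c) = base.d c
  δ_r : ∀ c, 𝒢.r (δ c) = base.d c
  δ_comp : ∀ c c', base.d c = base.d c' → δ (base.comp c c') = 𝒢.comp (δ c) (δ c')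
  δ_idm : ∀ v, δ (base.idm v) = 𝒢.idm v
  act : C → G → C
  act_d : ∀ c g, base.d c = 𝒢.d g → base.d (act c g) = 𝒢.r g
  act_idm : ∀ c v, base.d c = v → act c (𝒢.idm v) = c
  act_comp : ∀ c g h, base.d c = 𝒢.d g → 𝒢.r g = 𝒢.d h →
    act c (𝒢.comp g h) = act (act c g) h
  act_mul : ∀ c c' g, base.d c = base.d c' → base.d c = 𝒢.d g →
    act (base.comp c c') g = base.comp (act c g) (act c' g)
  act_one : ∀ v g, v = 𝒢.d g → act (base.idm v) g = base.idm (𝒢.r g)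
  cm1 : ∀ c g, base.d c = 𝒢.d g →
    δ (act c g) = 𝒢.comp (𝒢.comp (𝒢.inv g) (δ c)) g
  cm2 : ∀ c a, base.d c = base.d a →
    act c (δ a) = base.comp (base.comp (base.inv a) c) a

/-- A morphism of crossed modules over `𝒢` (covering the identity of `𝒢`): a map of
the total spaces preserving fibers, fiberwise products, identities and the `G`-action. -/
def IsCMHom {V G C C' : Type*} {𝒢 : AlgGroupoid V G}
    (X : CrossedModuleOver 𝒢 C) (Y : CrossedModuleOver 𝒢 C') (f : C → C') : Prop :=
  (∀ c, Y.base.d (f c) = X.base.d c) ∧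
  (∀ c c', X.base.d c = X.base.d c' →
    f (X.base.comp c c') = Y.base.comp (f c) (f c')) ∧
  (∀ v, f (X.base.idm v) = Y.base.idm v) ∧
  (∀ c g, X.base.d c = 𝒢.d g → f (X.act c g) = Y.act (f c) g)

universe u

section ProdAux

open scoped Classical

variable {V G C C' : Type u} {𝒢 : AlgGroupoid V G}
variable (X : CrossedModuleOver 𝒢 C) (Y : CrossedModuleOver 𝒢 C')

/-- Carrier of the fiber product of two crossed modules over `𝒢`. -/
abbrev PCar : Type u := {p : C × C' // X.base.d p.1 = Y.base.d p.2}

/-- vertex of a point of the fiber product -/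
def pd (p : PCar X Y) : V := X.base.d p.1.1

lemma psnd_d (p : PCar X Y) : pd X Y p = Y.base.d p.1.2 := p.2

/-- composition in the fiber product (totalised by a junk value) -/
noncomputable def pcomp (p q : PCar X Y) : PCar X Y :=
  if h : pd X Y p = pd X Y q then
    ⟨(X.base.comp p.1.1 q.1.1, Y.base.comp p.1.2 q.1.2), by
      rw [X.base.d_comp _ _ ((X.fib _).symm.trans h),
          Y.base.d_comp _ _ ((Y.fib _).symm.trans (p.2.symm.trans (h.trans q.2)))]
      exact p.2⟩
  else p

/-- identities in the fiber product -/
def pidm (v : V) : PCar X Y :=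
  ⟨(X.base.idm v, Y.base.idm v), by rw [X.base.d_idm, Y.base.d_idm]⟩

/-- inverses in the fiber product -/
def pinv (p : PCar X Y) : PCar X Y :=
  ⟨(X.base.inv p.1.1, Y.base.inv p.1.2), by
    rw [X.base.d_inv, ← X.fib, Y.base.d_inv, ← Y.fib]; exact p.2⟩

/-- action of `G` on the fiber product (totalised by a junk value) -/
noncomputable def pact (p : PCar X Y) (g : G) : PCar X Y :=
  if h : pd X Y p = 𝒢.d g then
    ⟨(X.act p.1.1 g, Y.act p.1.2 g), by
      rw [X.act_d _ _ h, Y.act_d _ _ (p.2.symm.trans h)]⟩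
  else p

lemma pcomp_fst {p q : PCar X Y} (h : pd X Y p = pd X Y q) :
    (pcomp X Y p q).1.1 = X.base.comp p.1.1 q.1.1 := by
  rw [pcomp, dif_pos h]

lemma pcomp_snd {p q : PCar X Y} (h : pd X Y p = pd X Y q) :
    (pcomp X Y p q).1.2 = Y.base.comp p.1.2 q.1.2 := by
  rw [pcomp, dif_pos h]

lemma pact_fst {p : PCar X Y} {g : G} (h : pd X Y p = 𝒢.d g) :
    (pact X Y p g).1.1 = X.act p.1.1 g := by
  rw [pact, dif_pos h]

lemma pact_snd {p : PCar X Y} {g : G} (h : pd X Y p = 𝒢.d g) :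
    (pact X Y p g).1.2 = Y.act p.1.2 g := by
  rw [pact, dif_pos h]

lemma pidm_fst (v : V) : (pidm X Y v).1.1 = X.base.idm v := rfl
lemma pidm_snd (v : V) : (pidm X Y v).1.2 = Y.base.idm v := rfl
lemma pinv_fst (p : PCar X Y) : (pinv X Y p).1.1 = X.base.inv p.1.1 := rfl
lemma pinv_snd (p : PCar X Y) : (pinv X Y p).1.2 = Y.base.inv p.1.2 := rfl

lemma pd_pcomp {p q : PCar X Y} (h : pd X Y p = pd X Y q) :
    pd X Y (pcomp X Y p q) = pd X Y p := by
  show X.base.d (pcomp X Y p q).1.1 = X.base.d p.1.1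
  rw [pcomp_fst X Y h]
  exact X.base.d_comp _ _ ((X.fib _).symm.trans h)

lemma pd_pact {p : PCar X Y} {g : G} (h : pd X Y p = 𝒢.d g) :
    pd X Y (pact X Y p g) = 𝒢.r g := by
  show X.base.d (pact X Y p g).1.1 = 𝒢.r g
  rw [pact_fst X Y h]
  exact X.act_d _ _ h

lemma pd_pidm (v : V) : pd X Y (pidm X Y v) = v := X.base.d_idm v

lemma pd_pinv (p : PCar X Y) : pd X Y (pinv X Y p) = pd X Y p := by
  show X.base.d (X.base.inv p.1.1) = X.base.d p.1.1
  rw [X.base.d_inv, ← X.fib]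

/-- extensionality for the fiber product -/
lemma PCar.ext {p q : PCar X Y} (h1 : p.1.1 = q.1.1) (h2 : p.1.2 = q.1.2) : p = q :=
  Subtype.ext (Prod.ext h1 h2)

lemma p_comp_assoc (p q r : PCar X Y) (h1 : pd X Y p = pd X Y q)
    (h2 : pd X Y q = pd X Y r) :
    pcomp X Y (pcomp X Y p q) r = pcomp X Y p (pcomp X Y q r) := by
  have hpq : pd X Y (pcomp X Y p q) = pd X Y r := (pd_pcomp X Y h1).trans (h1.trans h2)
  have hqr : pd X Y p = pd X Y (pcomp X Y q r) := by
    rw [pd_pcomp X Y h2]; exact h1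
  refine PCar.ext X Y ?_ ?_
  · rw [pcomp_fst X Y hpq, pcomp_fst X Y hqr, pcomp_fst X Y h1, pcomp_fst X Y h2]
    exact X.base.comp_assoc _ _ _ ((X.fib _).symm.trans h1) ((X.fib _).symm.trans h2)
  · rw [pcomp_snd X Y hpq, pcomp_snd X Y hqr, pcomp_snd X Y h1, pcomp_snd X Y h2]
    exact Y.base.comp_assoc _ _ _
      ((Y.fib _).symm.trans (p.2.symm.trans (h1.trans q.2)))
      ((Y.fib _).symm.trans (q.2.symm.trans (h2.trans r.2)))

lemma p_idm_comp (p : PCar X Y) : pcomp X Y (pidm X Y (pd X Y p)) p = p := by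
  have h : pd X Y (pidm X Y (pd X Y p)) = pd X Y p := pd_pidm X Y _
  refine PCar.ext X Y ?_ ?_
  · rw [pcomp_fst X Y h, pidm_fst]
    exact X.base.idm_comp _
  · rw [pcomp_snd X Y h, pidm_snd, psnd_d X Y p]
    exact Y.base.idm_comp _

lemma p_comp_idm (p : PCar X Y) : pcomp X Y p (pidm X Y (pd X Y p)) = p := by
  have h : pd X Y p = pd X Y (pidm X Y (pd X Y p)) := (pd_pidm X Y _).symm
  refine PCar.ext X Y ?_ ?_
  · rw [pcomp_fst X Y h, pidm_fst]
    have : pd X Y p = X.base.r p.1.1 := X.fib p.1.1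
    rw [this]
    exact X.base.comp_idm _
  · rw [pcomp_snd X Y h, pidm_snd, psnd_d X Y p, Y.fib p.1.2]
    exact Y.base.comp_idm _

lemma p_comp_inv (p : PCar X Y) :
    pcomp X Y p (pinv X Y p) = pidm X Y (pd X Y p) := by
  have h : pd X Y p = pd X Y (pinv X Y p) := (pd_pinv X Y p).symm
  refine PCar.ext X Y ?_ ?_
  · rw [pcomp_fst X Y h, pinv_fst, pidm_fst]
    exact X.base.comp_inv _
  · rw [pcomp_snd X Y h, pinv_snd, pidm_snd, psnd_d X Y p]
    exact Y.base.comp_inv _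

lemma p_inv_comp (p : PCar X Y) :
    pcomp X Y (pinv X Y p) p = pidm X Y (pd X Y p) := by
  have h : pd X Y (pinv X Y p) = pd X Y p := pd_pinv X Y p
  refine PCar.ext X Y ?_ ?_
  · rw [pcomp_fst X Y h, pinv_fst, pidm_fst, show pd X Y p = X.base.r p.1.1 from X.fib p.1.1]
    exact X.base.inv_comp _
  · rw [pcomp_snd X Y h, pinv_snd, pidm_snd, psnd_d X Y p, Y.fib p.1.2]
    exact Y.base.inv_comp _

/-- The fiber-product groupoid. -/
noncomputable def pbase : AlgGroupoid V (PCar X Y) where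
  d := pd X Y
  r := pd X Y
  comp := pcomp X Y
  idm := pidm X Y
  inv := pinv X Y
  d_idm := pd_pidm X Y
  r_idm := pd_pidm X Y
  d_comp := fun _ _ h => pd_pcomp X Y h
  r_comp := fun _ _ h => (pd_pcomp X Y h).trans h
  comp_assoc := p_comp_assoc X Y
  idm_comp := p_idm_comp X Y
  comp_idm := p_comp_idm X Y
  d_inv := pd_pinv X Y
  r_inv := pd_pinv X Y
  comp_inv := p_comp_inv X Y
  inv_comp := p_inv_comp X Y

lemma p_act_idm (p : PCar X Y) (v : V) (h : pd X Y p = v) :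
    pact X Y p (𝒢.idm v) = p := by
  have hc : pd X Y p = 𝒢.d (𝒢.idm v) := h.trans (𝒢.d_idm v).symm
  refine PCar.ext X Y ?_ ?_
  · rw [pact_fst X Y hc]; exact X.act_idm _ _ h
  · rw [pact_snd X Y hc]; exact Y.act_idm _ _ (p.2.symm.trans h)

lemma p_act_comp (p : PCar X Y) (g h : G) (hg : pd X Y p = 𝒢.d g)
    (hh : 𝒢.r g = 𝒢.d h) :
    pact X Y p (𝒢.comp g h) = pact X Y (pact X Y p g) h := by
  have hc : pd X Y p = 𝒢.d (𝒢.comp g h) := hg.trans (𝒢.d_comp _ _ hh).symm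
  have hc2 : pd X Y (pact X Y p g) = 𝒢.d h := (pd_pact X Y hg).trans hh
  refine PCar.ext X Y ?_ ?_
  · rw [pact_fst X Y hc, pact_fst X Y hc2, pact_fst X Y hg]
    exact X.act_comp _ _ _ hg hh
  · rw [pact_snd X Y hc, pact_snd X Y hc2, pact_snd X Y hg]
    exact Y.act_comp _ _ _ (p.2.symm.trans hg) hh

lemma p_act_mul (p q : PCar X Y) (g : G) (h : pd X Y p = pd X Y q)
    (hg : pd X Y p = 𝒢.d g) :
    pact X Y (pcomp X Y p q) g = pcomp X Y (pact X Y p g) (pact X Y q g) := by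
  have hc : pd X Y (pcomp X Y p q) = 𝒢.d g := (pd_pcomp X Y h).trans hg
  have hq : pd X Y q = 𝒢.d g := h.symm.trans hg
  have hc2 : pd X Y (pact X Y p g) = pd X Y (pact X Y q g) :=
    (pd_pact X Y hg).trans (pd_pact X Y hq).symm
  refine PCar.ext X Y ?_ ?_
  · rw [pact_fst X Y hc, pcomp_fst X Y h, pcomp_fst X Y hc2,
      pact_fst X Y hg, pact_fst X Y hq]
    exact X.act_mul _ _ _ h hg
  · rw [pact_snd X Y hc, pcomp_snd X Y h, pcomp_snd X Y hc2,
      pact_snd X Y hg, pact_snd X Y hq]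
    exact Y.act_mul _ _ _ (p.2.symm.trans (h.trans q.2)) (p.2.symm.trans hg)

lemma p_act_one (v : V) (g : G) (h : v = 𝒢.d g) :
    pact X Y (pidm X Y v) g = pidm X Y (𝒢.r g) := by
  have hc : pd X Y (pidm X Y v) = 𝒢.d g := (pd_pidm X Y v).trans h
  refine PCar.ext X Y ?_ ?_
  · rw [pact_fst X Y hc, pidm_fst, pidm_fst]; exact X.act_one _ _ h
  · rw [pact_snd X Y hc, pidm_snd, pidm_snd]; exact Y.act_one _ _ h

lemma p_cm1 (p : PCar X Y) (g : G) (h : pd X Y p = 𝒢.d g) :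
    X.δ (pact X Y p g).1.1 = 𝒢.comp (𝒢.comp (𝒢.inv g) (X.δ p.1.1)) g := by
  rw [pact_fst X Y h]
  exact X.cm1 _ _ h

lemma p_cm2
    (hδY : ∀ c', Y.δ c' = 𝒢.idm (Y.base.d c'))
    (htriv : ∀ c' a, Y.base.d c' = X.base.d a → Y.act c' (X.δ a) = c')
    (p a : PCar X Y) (h : pd X Y p = pd X Y a) :
    pact X Y p (X.δ a.1.1) =
      pcomp X Y (pcomp X Y (pinv X Y a) p) a := by
  have hc : pd X Y p = 𝒢.d (X.δ a.1.1) := h.trans (X.δ_d a.1.1).symm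
  have h1 : pd X Y (pinv X Y a) = pd X Y p := (pd_pinv X Y a).trans h.symm
  have h2 : pd X Y (pcomp X Y (pinv X Y a) p) = pd X Y a :=
    (pd_pcomp X Y h1).trans ((pd_pinv X Y a))
  refine PCar.ext X Y ?_ ?_
  · rw [pact_fst X Y hc, pcomp_fst X Y h2, pcomp_fst X Y h1, pinv_fst]
    exact X.cm2 _ _ h
  · rw [pact_snd X Y hc, pcomp_snd X Y h2, pcomp_snd X Y h1, pinv_snd]
    have hda : Y.base.d p.1.2 = Y.base.d a.1.2 := p.2.symm.trans (h.trans a.2)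
    have key := Y.cm2 p.1.2 a.1.2 hda
    rw [hδY a.1.2, Y.act_idm _ _ hda] at key
    rw [htriv p.1.2 a.1.1 (p.2.symm.trans h)]
    exact key

/-- The fiber product of crossed modules over `𝒢`, where `Y` is a `Q`-module. -/
noncomputable def prodCM
    (hδY : ∀ c', Y.δ c' = 𝒢.idm (Y.base.d c'))
    (htriv : ∀ c' a, Y.base.d c' = X.base.d a → Y.act c' (X.δ a) = c') :
    CrossedModuleOver 𝒢 (PCar X Y) where
  base := pbase X Y
  fib := fun _ => rfl
  δ := fun p => X.δ p.1.1
  δ_d := fun p => X.δ_d p.1.1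
  δ_r := fun p => X.δ_r p.1.1
  δ_comp := fun p q h => by
    show X.δ (pcomp X Y p q).1.1 = 𝒢.comp (X.δ p.1.1) (X.δ q.1.1)
    rw [pcomp_fst X Y h]
    exact X.δ_comp _ _ h
  δ_idm := fun v => X.δ_idm v
  act := pact X Y
  act_d := fun _ _ h => pd_pact X Y h
  act_idm := p_act_idm X Y
  act_comp := p_act_comp X Y
  act_mul := p_act_mul X Y
  act_one := p_act_one X Y
  cm1 := p_cm1 X Y
  cm2 := p_cm2 X Y hδY htriv

end ProdAux

/-- if `C → G` is a free crossed module of groupoids with basis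
`ω : R → G` (with basis map `ν : R → C`), then `C^{ab}` is a free module over the
quotient groupoid `Q = G/∂C` on the image of `R`.  A `Q`-module is a crossed
`G`-module `Y` with trivial boundary on which `∂C` acts trivially; freeness of
`C^{ab}` is expressed by the universal property: every fiberwise-compatible map
`ν' : R → Y` extends to a unique morphism `C → Y` of crossed modules sending `ν s`
to `ν' s` (such morphisms correspond exactly to `Q`-module maps `C^{ab} → Y`). -/
theorem stmt13 {V G C R : Type u} (𝒢 : AlgGroupoid V G) (X : CrossedModuleOver 𝒢 C)
    (ω : R → G) (hω : ∀ s, 𝒢.d (ω s) = 𝒢.r (ω s))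
    (ν : R → C) (hν : ∀ s, X.δ (ν s) = ω s)
    -- `X` is the free crossed module on `ω` with basis map `ν`:
    (hfree : ∀ (C' : Type u) (Y : CrossedModuleOver 𝒢 C') (σ : R → C'),
      (∀ s, Y.δ (σ s) = ω s) →
      ∃! f : C → C', IsCMHom X Y f ∧ ∀ s, f (ν s) = σ s) :
    -- conclusion: `C^{ab}` is the free `Q`-module on (the image of) `R`:
    ∀ (C' : Type u) (Y : CrossedModuleOver 𝒢 C'),
      (∀ c', Y.δ c' = 𝒢.idm (Y.base.d c')) →            -- `Y` has trivial boundary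
      (∀ c' a, Y.base.d c' = X.base.d a → Y.act c' (X.δ a) = c') →  -- `∂C` acts trivially
      ∀ ν' : R → C', (∀ s, Y.base.d (ν' s) = 𝒢.d (ω s)) →
        ∃! f : C → C', IsCMHom X Y f ∧ ∀ s, f (ν s) = ν' s := by
  intro C' Y hδY htriv ν' hν'
  have hσd : ∀ s, X.base.d (ν s) = Y.base.d (ν' s) := fun s => by
    have h1 : X.base.d (ν s) = 𝒢.d (ω s) := by rw [← X.δ_d (ν s), hν s]
    rw [h1, ← hν' s]
  obtain ⟨F, ⟨hFhom, hFν⟩, hFuniq⟩ :=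
    hfree (PCar X Y) (prodCM X Y hδY htriv)
      (fun s => ⟨(ν s, ν' s), hσd s⟩) (fun s => hν s)
  obtain ⟨hFd', hFcomp, hFidm, hFact⟩ := hFhom
  have hFd : ∀ c, pd X Y (F c) = X.base.d c := hFd'
  obtain ⟨I, hI, hIuniq⟩ := hfree C X ν hν
  have hid : ∀ c : C, (F c).1.1 = c := by
    have e1 : (fun c => (F c).1.1) = I := by
      refine hIuniq _ ⟨⟨fun c => hFd c, ?_, ?_, ?_⟩, fun s => by show (F (ν s)).1.1 = ν s; rw [hFν s]⟩
      · intro c c' h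
        show (F (X.base.comp c c')).1.1 = X.base.comp (F c).1.1 (F c').1.1
        rw [hFcomp c c' h]
        exact pcomp_fst X Y ((hFd c).trans (h.trans (hFd c').symm))
      · intro v
        show (F (X.base.idm v)).1.1 = X.base.idm v
        rw [hFidm v]
        rfl
      · intro c g h
        show (F (X.act c g)).1.1 = X.act (F c).1.1 g
        rw [hFact c g h]
        exact pact_fst X Y ((hFd c).trans h)
    have e2 : (fun c : C => c) = I :=
      hIuniq _ ⟨⟨fun _ => rfl, fun _ _ _ => rfl, fun _ => rfl, fun _ _ _ => rfl⟩,
        fun _ => rfl⟩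
    intro c
    exact (congrFun (e1.trans e2.symm) c)
  refine ⟨fun c => (F c).1.2, ⟨⟨?_, ?_, ?_, ?_⟩, ?_⟩, ?_⟩
  · intro c
    rw [← (F c).2]
    show pd X Y (F c) = X.base.d c
    exact hFd c
  · intro c c' h
    show (F (X.base.comp c c')).1.2 = Y.base.comp (F c).1.2 (F c').1.2
    rw [hFcomp c c' h]
    exact pcomp_snd X Y ((hFd c).trans (h.trans (hFd c').symm))
  · intro v
    show (F (X.base.idm v)).1.2 = Y.base.idm v
    rw [hFidm v]
    rfl
  · intro c g h
    show (F (X.act c g)).1.2 = Y.act (F c).1.2 g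
    rw [hFact c g h]
    exact pact_snd X Y ((hFd c).trans h)
  · intro s
    show (F (ν s)).1.2 = ν' s
    rw [hFν s]
  · intro g ⟨⟨hg1, hg2, hg3, hg4⟩, hg5⟩
    have hGF : (fun c => (⟨(c, g c), (hg1 c).symm⟩ : PCar X Y)) = F := by
      refine hFuniq _ ⟨⟨fun c => rfl, ?_, ?_, ?_⟩, ?_⟩
      · intro c c' h
        refine (PCar.ext X Y ?_ ?_) <;> simp only [prodCM, pbase]
        · rw [pcomp_fst X Y (show pd X Y ⟨(c, g c), (hg1 c).symm⟩ =
            pd X Y ⟨(c', g c'), (hg1 c').symm⟩ from h)]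
        · rw [pcomp_snd X Y (show pd X Y ⟨(c, g c), (hg1 c).symm⟩ =
            pd X Y ⟨(c', g c'), (hg1 c').symm⟩ from h)]
          exact hg2 c c' h
      · intro v
        exact PCar.ext X Y rfl (hg3 v)
      · intro c gg h
        refine (PCar.ext X Y ?_ ?_) <;> simp only [prodCM]
        · rw [pact_fst X Y (show pd X Y ⟨(c, g c), (hg1 c).symm⟩ = 𝒢.d gg from h)]
        · rw [pact_snd X Y (show pd X Y ⟨(c, g c), (hg1 c).symm⟩ = 𝒢.d gg from h)]
          exact hg4 c gg h
      · intro s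
        exact PCar.ext X Y rfl (hg5 s)
    funext c
    exact congrArg (fun p : PCar X Y => p.1.2) (congrFun hGF c)
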